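/- arXiv:2304.08983 — 7 statements merged into one kernel-verified Lean document; each statement's English description precedes it below -/
import Mathlib

section
/- Let Φ : X → ∏_{i=1}^p ℝ^{n_i}. Suppose there exists a constant M ≥ 0 such that ‖Φ(x₁) − Φ(x₂)‖ ≤ M·‖Φ(x₁) − Φ(x₂) + e‖ for all x₁, x₂ ∈ X and all block vectors e with at most k nonzero blocks (with the sup norm). Then for every index set I ⊆ {1,...,p} with |I| ≥ p−k, one has ‖Φ(x₁) − Φ(x₂)‖ ≤ M·‖Φ_I(x₁) − Φ_I(x₂)‖ for all x₁, x₂ ∈ X, where Φ_I = π_I ∘ Φ. -/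
open scoped Classical

/-- Projection of a block vector onto the blocks indexed by `I`. -/
noncomputable def blockProj {p : ℕ} {n : Fin p → ℕ} (I : Finset (Fin p))
    (v : ∀ i : Fin p, Fin (n i) → ℝ) : ∀ i : ↥I, Fin (n i) → ℝ :=
  fun i => v i

/-- Number of nonzero blocks of a block vector. -/
noncomputable def blockSupp {p : ℕ} {n : Fin p → ℕ}
    (v : ∀ i : Fin p, Fin (n i) → ℝ) : ℕ :=
  (Finset.univ.filter fun i => v i ≠ 0).card

/-- `Φ` is `k`-redundant: for every index set with at least `p - k` elements,
the projection onto those blocks is injective on the image of `Φ`. -/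
def Redundant {X : Type*} {p : ℕ} {n : Fin p → ℕ}
    (Φ : X → ∀ i : Fin p, Fin (n i) → ℝ) (k : ℕ) : Prop :=
  ∀ I : Finset (Fin p), p - k ≤ I.card →
    Set.InjOn (blockProj I) (Set.range Φ)


theorem stmt2 {X : Type*} {p k : ℕ} {n : Fin p → ℕ}
    (Φ : X → ∀ i : Fin p, Fin (n i) → ℝ)
    (M : ℝ) (hM : 0 ≤ M)
    (h : ∀ x₁ x₂ : X, ∀ e : ∀ i : Fin p, Fin (n i) → ℝ,
      blockSupp e ≤ k → ‖Φ x₁ - Φ x₂‖ ≤ M * ‖Φ x₁ - Φ x₂ + e‖) :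
    ∀ I : Finset (Fin p), p - k ≤ I.card →
      ∀ x₁ x₂ : X, ‖Φ x₁ - Φ x₂‖ ≤ M * ‖blockProj I (Φ x₁) - blockProj I (Φ x₂)‖ := by
  intro I hI x₁ x₂
  set d : ∀ i : Fin p, Fin (n i) → ℝ := Φ x₁ - Φ x₂ with hd
  set e : ∀ i : Fin p, Fin (n i) → ℝ := fun i => if i ∈ I then 0 else - d i with he
  have hsupp : blockSupp e ≤ k := by
    have hsub : (Finset.univ.filter fun i => e i ≠ 0) ⊆ Iᶜ := by
      intro i hi
      simp only [Finset.mem_filter] at hi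
      simp only [Finset.mem_compl]
      intro hmem
      exact hi.2 (by simp [he, hmem])
    calc blockSupp e ≤ Iᶜ.card := Finset.card_le_card hsub
      _ = p - I.card := by simp [Finset.card_compl]
      _ ≤ k := by omega
  have key := h x₁ x₂ e hsupp
  have hde : ∀ i, (d + e) i = if i ∈ I then d i else 0 := by
    intro i
    by_cases hmem : i ∈ I <;> simp [he, hmem]
  have hnorm : ‖d + e‖₊ = ‖blockProj I (Φ x₁) - blockProj I (Φ x₂)‖₊ := by
    have hproj : blockProj I (Φ x₁) - blockProj I (Φ x₂) = fun i : ↥I => d i := rfl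
    rw [hproj, Pi.nnnorm_def, Pi.nnnorm_def]
    rw [Finset.univ_eq_attach, Finset.sup_attach I (fun i => ‖d i‖₊)]
    apply le_antisymm
    · apply Finset.sup_le
      intro i _
      rw [hde i]
      by_cases hmem : i ∈ I
      · simp only [if_pos hmem]
        exact Finset.le_sup (f := fun j => ‖d j‖₊) hmem
      · simp [if_neg hmem]
    · apply Finset.sup_le
      intro i hmem
      have : ‖(d + e) i‖₊ = ‖d i‖₊ := by rw [hde i, if_pos hmem]
      rw [← this]
      exact Finset.le_sup (f := fun j => ‖(d + e) j‖₊) (Finset.mem_univ i)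
  have hnorm' : ‖Φ x₁ - Φ x₂ + e‖ = ‖blockProj I (Φ x₁) - blockProj I (Φ x₂)‖ := by
    rw [← hd]
    exact congrArg NNReal.toReal hnorm
  rw [hnorm'] at key
  exact key
end

section
/- Let Φ : X → ∏_{i=1}^p ℝ^{n_i} and M ≥ 0. Suppose for every index set I ⊆ {1,...,p} with |I| ≥ p−k, ‖Φ(x₁) − Φ(x₂)‖ ≤ M·‖Φ_I(x₁) − Φ_I(x₂)‖ for all x₁, x₂ ∈ X (sup norm). Then for all x₁, x₂ ∈ X and all e with at most k nonzero blocks, ‖Φ(x₁) − Φ(x₂)‖ ≤ M·‖Φ(x₁) − Φ(x₂) + e‖. -/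
open scoped Classical

theorem stmt3 {X : Type*} {p k : ℕ} {n : Fin p → ℕ}
    (Φ : X → ∀ i : Fin p, Fin (n i) → ℝ)
    (M : ℝ) (hM : 0 ≤ M)
    (h : ∀ I : Finset (Fin p), p - k ≤ I.card →
      ∀ x₁ x₂ : X, ‖Φ x₁ - Φ x₂‖ ≤ M * ‖blockProj I (Φ x₁) - blockProj I (Φ x₂)‖) :
    ∀ x₁ x₂ : X, ∀ e : ∀ i : Fin p, Fin (n i) → ℝ,
      blockSupp e ≤ k → ‖Φ x₁ - Φ x₂‖ ≤ M * ‖Φ x₁ - Φ x₂ + e‖ := by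
  intro x₁ x₂ e he
  set I : Finset (Fin p) := (Finset.univ.filter fun i => e i ≠ 0)ᶜ with hI
  have hcard : p - k ≤ I.card := by
    have : I.card = p - blockSupp e := by
      rw [hI, Finset.card_compl, blockSupp, Fintype.card_fin]
    rw [this]
    exact Nat.sub_le_sub_left he p
  have key := h I hcard x₁ x₂
  have heq : blockProj I (Φ x₁) - blockProj I (Φ x₂)
      = blockProj I (Φ x₁ - Φ x₂ + e) := by
    funext i
    have hi : e i = 0 := by
      have := i.2
      simp [hI, Finset.mem_compl, Finset.mem_filter] at this
      exact this
    simp [blockProj, hi]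
  rw [heq] at key
  refine key.trans (mul_le_mul_of_nonneg_left ?_ hM)
  apply pi_norm_le_iff_of_nonneg (norm_nonneg _) |>.2
  intro i
  exact norm_le_pi_norm (Φ x₁ - Φ x₂ + e) i.1
end

section
/- Suppose Φ : X → ∏_{i=1}^p ℝ^{n_i} is 2q-redundant and there is a decomposition ẑ = Φ(x) + r + e where r, e are block vectors, r = 0, e has at most q nonzero blocks, and suppose a compact-image assumption holds. Let I ⊆ {1,...,p} with |I| = p−q. Then e_I = 0 (all blocks of e with index in I vanish) if and only if ẑ_I ∈ Φ_I(X), where ẑ_I and Φ_I denote the restriction to blocks in I. -/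
open scoped Classical

theorem stmt4 {X : Type*} [TopologicalSpace X] {p q : ℕ} {n : Fin p → ℕ}
    (Φ : X → ∀ i : Fin p, Fin (n i) → ℝ)
    (hred : Redundant Φ (2 * q))
    (hcomp : IsCompact (Set.range Φ))
    (x : X) (zhat r e : ∀ i : Fin p, Fin (n i) → ℝ)
    (hz : zhat = Φ x + r + e) (hr : r = 0) (he : blockSupp e ≤ q)
    (I : Finset (Fin p)) (hI : I.card = p - q) :
    (∀ i ∈ I, e i = 0) ↔
      blockProj I zhat ∈ Set.range (fun x' => blockProj I (Φ x')) := by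
  subst hr hz
  constructor
  · intro h
    refine ⟨x, ?_⟩
    funext i j
    have := h i i.2
    simp [blockProj, this]
  · rintro ⟨x', hx'⟩ i hi
    set T := I.filter (fun i => e i = 0) with hT
    have hcard : p - 2 * q ≤ T.card := by
      have h1 : (I.filter fun i => ¬ e i = 0).card ≤ blockSupp e := by
        apply Finset.card_le_card
        intro a ha
        simp only [Finset.mem_filter] at ha
        simp [blockSupp, ha.2]
      have h2 := Finset.card_filter_add_card_filter_not (s := I)
        (p := fun i => e i = 0)
      have hd : T.card = (I.filter fun i => e i = 0).card := by rw [hT]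
      omega
    have heq : Φ x' = Φ x := by
      apply hred T hcard ⟨x', rfl⟩ ⟨x, rfl⟩
      funext i' j
      have hi'I : (i' : Fin p) ∈ I := (Finset.mem_filter.mp i'.2).1
      have he0 : e (i' : Fin p) = 0 := (Finset.mem_filter.mp i'.2).2
      have h3 := congrFun (congrFun hx' ⟨(i' : Fin p), hi'I⟩) j
      simp only [blockProj, Pi.add_apply, Pi.zero_apply, he0, add_zero] at h3
      simpa [blockProj] using h3
    funext j
    have h4 := congrFun (congrFun hx' ⟨i, hi⟩) j
    simp only [blockProj, Pi.add_apply, Pi.zero_apply, heq, add_zero] at h4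
    have : e i j = 0 := by linarith [h4]
    simpa using this
end

section
/- Let 𝒳 ⊆ ℝⁿ be compact, Φ : 𝒳 → ∏_{i=1}^p ℝ^{n_i} continuous and 2q-Lipschitz redundant with constant M, and suppose ẑ = Φ(x) + r + e with ‖r‖ ≤ δ (sup norm) and e having at most q nonzero blocks. Let I ⊆ {1,...,p} with |I| = p−q. If dist(ẑ_I, Φ_I(𝒳)) ≤ δ, then ‖ẑ_I − Φ_I(x)‖ ≤ (2M+1)·δ. -/
open scoped Classical

lemma blockProj_sub {p : ℕ} {n : Fin p → ℕ} (I : Finset (Fin p))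
    (a b : ∀ i : Fin p, Fin (n i) → ℝ) :
    blockProj I (a - b) = blockProj I a - blockProj I b := rfl

lemma norm_blockProj_le {p : ℕ} {n : Fin p → ℕ} (I : Finset (Fin p))
    (v : ∀ i : Fin p, Fin (n i) → ℝ) : ‖blockProj I v‖ ≤ ‖v‖ := by
  rw [pi_norm_le_iff_of_nonneg (norm_nonneg v)]
  intro i
  exact norm_le_pi_norm v i.1

lemma norm_blockProj_mono {p : ℕ} {n : Fin p → ℕ} {J I : Finset (Fin p)} (h : J ⊆ I)
    (v : ∀ i : Fin p, Fin (n i) → ℝ) : ‖blockProj J v‖ ≤ ‖blockProj I v‖ := by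
  rw [pi_norm_le_iff_of_nonneg (norm_nonneg _)]
  intro i
  have : blockProj J v i = blockProj I v ⟨i.1, h i.2⟩ := rfl
  rw [this]
  exact norm_le_pi_norm (blockProj I v) _

theorem stmt7 {N p q : ℕ} {n : Fin p → ℕ}
    (𝒳 : Set (EuclideanSpace ℝ (Fin N))) (hK : IsCompact 𝒳)
    (Φ : EuclideanSpace ℝ (Fin N) → ∀ i : Fin p, Fin (n i) → ℝ)
    (hΦ : ContinuousOn Φ 𝒳)
    (M δ : ℝ) (hM : 0 ≤ M) (hδ : 0 ≤ δ)
    (hLred : ∀ J : Finset (Fin p), p - 2 * q ≤ J.card →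
      ∀ x₁ ∈ 𝒳, ∀ x₂ ∈ 𝒳,
        ‖Φ x₁ - Φ x₂‖ ≤ M * ‖blockProj J (Φ x₁) - blockProj J (Φ x₂)‖)
    (x : EuclideanSpace ℝ (Fin N)) (hx : x ∈ 𝒳)
    (zhat r e : ∀ i : Fin p, Fin (n i) → ℝ)
    (hz : zhat = Φ x + r + e) (hr : ‖r‖ ≤ δ) (he : blockSupp e ≤ q)
    (I : Finset (Fin p)) (hI : I.card = p - q)
    (hdist : Metric.infDist (blockProj I zhat)
        ((fun x' => blockProj I (Φ x')) '' 𝒳) ≤ δ) :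
    ‖blockProj I zhat - blockProj I (Φ x)‖ ≤ (2 * M + 1) * δ := by
  -- the image is compact and nonempty, so infDist is attained
  have himg : IsCompact ((fun x' => blockProj I (Φ x')) '' 𝒳) := by
    apply hK.image_of_continuousOn
    exact (Pi.continuous_precomp' (fun i : ↥I => (i : Fin p))).comp_continuousOn hΦ
  have hne : ((fun x' => blockProj I (Φ x')) '' 𝒳).Nonempty := ⟨_, ⟨x, hx, rfl⟩⟩
  obtain ⟨y, hy, hyd⟩ := himg.exists_infDist_eq_dist hne (blockProj I zhat)
  obtain ⟨x', hx', rfl⟩ := hy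
  have h1 : ‖blockProj I zhat - blockProj I (Φ x')‖ ≤ δ := by
    rw [← dist_eq_norm, ← hyd]; exact hdist
  -- the set of good blocks
  set S := Finset.univ.filter fun i => e i ≠ 0 with hS
  set J := I \ S with hJ
  have hJI : J ⊆ I := Finset.sdiff_subset
  have hJcard : p - 2 * q ≤ J.card := by
    have h2 : I.card - S.card ≤ J.card := Finset.le_card_sdiff S I
    have hSq : S.card ≤ q := he
    omega
  -- on J, zhat - Φ x = r
  have hJr : blockProj J zhat - blockProj J (Φ x) = blockProj J r := by
    funext i k
    have hiJ : (i : Fin p) ∈ J := i.2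
    have hie : e (i : Fin p) = 0 := by
      by_contra hne'
      exact (Finset.mem_sdiff.mp hiJ).2 (Finset.mem_filter.mpr ⟨Finset.mem_univ _, hne'⟩)
    simp [blockProj, hz, hie]
  have h2 : ‖blockProj J zhat - blockProj J (Φ x)‖ ≤ δ :=
    hJr ▸ le_trans (norm_blockProj_le J r) hr
  have h3 : ‖blockProj J zhat - blockProj J (Φ x')‖ ≤ δ := by
    rw [← blockProj_sub]
    exact le_trans (norm_blockProj_mono hJI _) (by rw [blockProj_sub]; exact h1)
  have h4 : ‖blockProj J (Φ x) - blockProj J (Φ x')‖ ≤ 2 * δ := by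
    have := norm_sub_le_norm_sub_add_norm_sub (blockProj J (Φ x)) (blockProj J zhat)
      (blockProj J (Φ x'))
    calc ‖blockProj J (Φ x) - blockProj J (Φ x')‖
        ≤ ‖blockProj J (Φ x) - blockProj J zhat‖ + ‖blockProj J zhat - blockProj J (Φ x')‖ :=
          this
      _ ≤ δ + δ := by
          refine add_le_add ?_ h3
          rw [norm_sub_rev]; exact h2
      _ = 2 * δ := by ring
  have h5 : ‖Φ x - Φ x'‖ ≤ 2 * M * δ := by
    calc ‖Φ x - Φ x'‖ ≤ M * ‖blockProj J (Φ x) - blockProj J (Φ x')‖ :=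
          hLred J hJcard x hx x' hx'
      _ ≤ M * (2 * δ) := mul_le_mul_of_nonneg_left h4 hM
      _ = 2 * M * δ := by ring
  have h6 : ‖blockProj I (Φ x) - blockProj I (Φ x')‖ ≤ 2 * M * δ := by
    rw [← blockProj_sub]
    exact le_trans (norm_blockProj_le I _) h5
  calc ‖blockProj I zhat - blockProj I (Φ x)‖
      ≤ ‖blockProj I zhat - blockProj I (Φ x')‖ + ‖blockProj I (Φ x') - blockProj I (Φ x)‖ :=
        norm_sub_le_norm_sub_add_norm_sub _ _ _
    _ ≤ δ + 2 * M * δ := add_le_add h1 (by rw [norm_sub_rev]; exact h6)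
    _ = (2 * M + 1) * δ := by ring
end

section
/- Let A ∈ ℝ^{n×n} and suppose its characteristic polynomial factors as γ_A(s) = ∏_{j=1}^l γ^j(s) with the γ^j pairwise coprime. Let A be block-diagonal, A = diag(A¹,...,Aˡ) with char(A^j) = γ^j. Let C = [C¹, C², ..., Cˡ] be a row vector partitioned conformably, and x = (x¹,...,xˡ). If C·A^{k-1}·x = 0 for all k = 1,...,n, then C^j·(A^j)^{k-1}·x^j = 0 for all j = 1,...,l and all k = 1,...,n. -/
open Matrix Polynomial

noncomputable def bdAlgHom {l : ℕ} {m : Fin l → ℕ} :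
    (∀ j : Fin l, Matrix (Fin (m j)) (Fin (m j)) ℝ) →ₐ[ℝ]
    Matrix ((j : Fin l) × Fin (m j)) ((j : Fin l) × Fin (m j)) ℝ :=
  { Matrix.blockDiagonal'RingHom (fun j => Fin (m j)) ℝ with
    commutes' := by
      intro r
      show Matrix.blockDiagonal' _ = _
      have : (algebraMap ℝ (∀ j : Fin l, Matrix (Fin (m j)) (Fin (m j)) ℝ) r)
          = r • (1 : ∀ j : Fin l, Matrix (Fin (m j)) (Fin (m j)) ℝ) := by
        rw [Algebra.algebraMap_eq_smul_one]
      rw [this, Matrix.blockDiagonal'_smul, Matrix.blockDiagonal'_one,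
        ← Algebra.algebraMap_eq_smul_one] }

lemma bdAlgHom_apply {l : ℕ} {m : Fin l → ℕ}
    (M : ∀ j : Fin l, Matrix (Fin (m j)) (Fin (m j)) ℝ) :
    bdAlgHom M = Matrix.blockDiagonal' M := rfl

lemma aeval_bd {l : ℕ} {m : Fin l → ℕ}
    (A : ∀ j : Fin l, Matrix (Fin (m j)) (Fin (m j)) ℝ) (p : ℝ[X]) :
    aeval (Matrix.blockDiagonal' A) p
      = Matrix.blockDiagonal' (fun j => aeval (A j) p) :=
  calc aeval (Matrix.blockDiagonal' A) p = aeval (bdAlgHom A) p := rfl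
    _ = bdAlgHom (aeval A p) := aeval_algHom_apply _ _ _
    _ = Matrix.blockDiagonal' (fun j => aeval (A j) p) := by
        rw [bdAlgHom_apply]
        have : (aeval A p) = fun j => aeval (A j) p := funext fun j =>
          (aeval_algHom_apply
            (Pi.evalAlgHom ℝ (fun j : Fin l => Matrix (Fin (m j)) (Fin (m j)) ℝ) j) A p).symm
        rw [this]

lemma bd_mulVec_apply {l : ℕ} {m : Fin l → ℕ}
    (M : ∀ j : Fin l, Matrix (Fin (m j)) (Fin (m j)) ℝ)
    (x : ((j : Fin l) × Fin (m j)) → ℝ) (j : Fin l) (a : Fin (m j)) :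
    (Matrix.blockDiagonal' M).mulVec x ⟨j, a⟩
      = (M j).mulVec (fun i => x ⟨j, i⟩) a := by
  classical
  simp only [Matrix.mulVec, dotProduct]
  rw [← Finset.univ_sigma_univ, Finset.sum_sigma]
  rw [Finset.sum_eq_single j]
  · exact Finset.sum_congr rfl fun b _ => by rw [Matrix.blockDiagonal'_apply_eq]
  · intro i _ hij
    exact Finset.sum_eq_zero fun b _ => by
      rw [Matrix.blockDiagonal'_apply_ne _ _ _ (Ne.symm hij), zero_mul]
  · intro hj; exact absurd (Finset.mem_univ j) hj

lemma split_dot {l : ℕ} {m : Fin l → ℕ}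
    (M : ∀ j : Fin l, Matrix (Fin (m j)) (Fin (m j)) ℝ)
    (c x : ((j : Fin l) × Fin (m j)) → ℝ) :
    c ⬝ᵥ (Matrix.blockDiagonal' M).mulVec x
      = ∑ j : Fin l, (fun i => c ⟨j, i⟩) ⬝ᵥ (M j).mulVec (fun i => x ⟨j, i⟩) := by
  classical
  simp only [dotProduct]
  rw [← Finset.univ_sigma_univ, Finset.sum_sigma]
  exact Finset.sum_congr rfl fun j _ => Finset.sum_congr rfl fun a _ => by
    rw [bd_mulVec_apply]

theorem stmt14 {l : ℕ} {m : Fin l → ℕ}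
    (A : ∀ j : Fin l, Matrix (Fin (m j)) (Fin (m j)) ℝ)
    (hcop : ∀ j₁ j₂ : Fin l, j₁ ≠ j₂ → IsCoprime (A j₁).charpoly (A j₂).charpoly)
    (c x : ((j : Fin l) × Fin (m j)) → ℝ)
    (h : ∀ k : ℕ, k < Fintype.card ((j : Fin l) × Fin (m j)) →
      c ⬝ᵥ ((Matrix.blockDiagonal' A) ^ k).mulVec x = 0) :
    ∀ j : Fin l, ∀ k : ℕ, k < Fintype.card ((j : Fin l) × Fin (m j)) →
      (fun i => c ⟨j, i⟩) ⬝ᵥ ((A j) ^ k).mulVec (fun i => x ⟨j, i⟩) = 0 := by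
  classical
  intro j k hk
  set n := Fintype.card ((j : Fin l) × Fin (m j)) with hn
  have hnpos : 0 < n := lt_of_le_of_lt (Nat.zero_le k) hk
  set B := Matrix.blockDiagonal' A with hBdef
  -- linear functional in the matrix argument
  let φ : Matrix ((j : Fin l) × Fin (m j)) ((j : Fin l) × Fin (m j)) ℝ →+ ℝ :=
    { toFun := fun M => c ⬝ᵥ M.mulVec x
      map_zero' := by simp [Matrix.zero_mulVec]
      map_add' := fun M N => by
        show c ⬝ᵥ (M + N).mulVec x = c ⬝ᵥ M.mulVec x + c ⬝ᵥ N.mulVec x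
        rw [Matrix.add_mulVec, dotProduct_add] }
  have φ_smul : ∀ (r : ℝ) M, φ (r • M) = r * φ M := fun r M => by
    show c ⬝ᵥ (r • M).mulVec x = r * (c ⬝ᵥ M.mulVec x)
    rw [Matrix.smul_mulVec, dotProduct_smul, smul_eq_mul]
  have hlow : ∀ q : ℝ[X], q.natDegree < n → c ⬝ᵥ (aeval B q).mulVec x = 0 := by
    intro q hq
    have : c ⬝ᵥ (aeval B q).mulVec x = φ (aeval B q) := rfl
    rw [this, aeval_eq_sum_range' hq, map_sum]
    apply Finset.sum_eq_zero
    intro i hi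
    rw [φ_smul]
    have : φ (B ^ i) = c ⬝ᵥ (B ^ i).mulVec x := rfl
    rw [this, h i (Finset.mem_range.mp hi), mul_zero]
  have key : ∀ q : ℝ[X], c ⬝ᵥ (aeval B q).mulVec x = 0 := by
    intro q
    have hmono : B.charpoly.Monic := B.charpoly_monic
    have hdeg : B.charpoly.natDegree = n := B.charpoly_natDegree_eq_dim
    have hne1 : B.charpoly ≠ 1 := by
      intro hc; rw [hc] at hdeg; simp at hdeg; omega
    have hq := Polynomial.modByMonic_add_div q B.charpoly
    calc c ⬝ᵥ (aeval B q).mulVec x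
        = c ⬝ᵥ (aeval B (q %ₘ B.charpoly + B.charpoly * (q /ₘ B.charpoly))).mulVec x := by
          rw [hq]
      _ = c ⬝ᵥ (aeval B (q %ₘ B.charpoly)).mulVec x := by
          rw [map_add, _root_.map_mul, Matrix.aeval_self_charpoly, zero_mul, add_zero]
      _ = 0 := hlow _ (hdeg ▸ Polynomial.natDegree_modByMonic_lt q hmono hne1)
  -- choose the polynomial
  set γ' : ℝ[X] := ∏ i ∈ Finset.univ.erase j, (A i).charpoly with hγ'
  have hcop' : IsCoprime (A j).charpoly γ' :=
    IsCoprime.prod_right fun i hi => hcop j i (Ne.symm (Finset.ne_of_mem_erase hi))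
  obtain ⟨u, v, huv⟩ := hcop'
  set p : ℝ[X] := X ^ k * (v * γ') with hp
  have h1 : aeval (A j) p = (A j) ^ k := by
    have h0 : aeval (A j) (u * (A j).charpoly + v * γ') = 1 := by rw [huv]; simp
    rw [map_add, _root_.map_mul, _root_.map_mul, Matrix.aeval_self_charpoly, mul_zero,
      zero_add, ← _root_.map_mul] at h0
    rw [hp, _root_.map_mul, map_pow, aeval_X, h0, mul_one]
  have h2 : ∀ i : Fin l, i ≠ j → aeval (A i) p = 0 := by
    intro i hij
    have hmem : i ∈ Finset.univ.erase j := Finset.mem_erase.mpr ⟨hij, Finset.mem_univ i⟩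
    have hfac : γ' = (A i).charpoly * ∏ i' ∈ (Finset.univ.erase j).erase i, (A i').charpoly :=
      (Finset.mul_prod_erase _ _ hmem).symm
    rw [hp, _root_.map_mul, _root_.map_mul, hfac, _root_.map_mul,
      Matrix.aeval_self_charpoly, zero_mul, mul_zero, mul_zero]
  have hkey := key p
  rw [hBdef, aeval_bd, split_dot] at hkey
  rw [Finset.sum_eq_single j] at hkey
  · rw [h1] at hkey; exact hkey
  · intro i _ hij
    rw [h2 i hij, Matrix.zero_mulVec, dotProduct_zero]
  · intro hj; exact absurd (Finset.mem_univ j) hj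
end

section
/- Let Φ_i : 𝒳 → ℝ^{n_i}, i ∈ {1,...,p}, and suppose there are invertible maps T_i and a change of coordinates x ↦ (𝗑¹,...,𝗑ˡ) such that T_i(Φ_i(x)) = (φ_i^j(𝗑^j))_{j ∈ N_i} for index sets N_i ⊆ {1,...,l}. Define P_j = { i : j ∈ N_i } and Ψ^j(x) = (φ_i^j(𝗑^j))_{i ∈ P_j}. If every Ψ^j is 2q-redundant (with respect to removing blocks indexed by subsets of P_j), then Φ = (Φ_1,...,Φ_p) is 2q-redundant. -/
open scoped Classical

theorem stmt17 {X : Type*} {p l q : ℕ} {n : Fin p → ℕ} {m : Fin l → ℕ}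
    {d : Fin p → Fin l → ℕ}
    (Φ : ∀ i : Fin p, X → Fin (n i) → ℝ)
    (N : Fin p → Finset (Fin l))
    (T : ∀ i : Fin p, (Fin (n i) → ℝ) ≃ (∀ j : ↥(N i), Fin (d i j) → ℝ))
    (Tx : X → ∀ j : Fin l, Fin (m j) → ℝ) (hTx : Function.Bijective Tx)
    (φ : ∀ i : Fin p, ∀ j : Fin l, (Fin (m j) → ℝ) → Fin (d i j) → ℝ)
    (hdec : ∀ i : Fin p, ∀ x : X, T i (Φ i x) = fun j : ↥(N i) => φ i j.1 (Tx x j.1))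
    -- every Ψ^j is 2q-redundant
    (hΨ : ∀ j : Fin l, ∀ I : Finset (Fin p),
      I ⊆ Finset.univ.filter (fun i : Fin p => j ∈ N i) →
      (Finset.univ.filter (fun i : Fin p => j ∈ N i)).card - 2 * q ≤ I.card →
      ∀ x₁ x₂ : X, (∀ i ∈ I, φ i j (Tx x₁ j) = φ i j (Tx x₂ j)) →
        ∀ i ∈ Finset.univ.filter (fun i : Fin p => j ∈ N i),
          φ i j (Tx x₁ j) = φ i j (Tx x₂ j)) :
    -- Φ is 2q-redundant
    ∀ I : Finset (Fin p), p - 2 * q ≤ I.card →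
      ∀ x₁ x₂ : X, (∀ i ∈ I, Φ i x₁ = Φ i x₂) → ∀ i : Fin p, Φ i x₁ = Φ i x₂ := by

  intro I hI x₁ x₂ hagree i
  -- key: for each j, all i in P_j have equal φ values
  have key : ∀ j : Fin l, ∀ i : Fin p, j ∈ N i →
      φ i j (Tx x₁ j) = φ i j (Tx x₂ j) := by
    intro j i hij
    set Pj := Finset.univ.filter (fun i : Fin p => j ∈ N i) with hPj
    set Ij := I ∩ Pj with hIj
    have hsub : Ij ⊆ Pj := Finset.inter_subset_right
    have hcard : Pj.card - 2 * q ≤ Ij.card := by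
      have h1 : Pj.card ≤ Ij.card + ((Finset.univ : Finset (Fin p)).card - I.card) := by
        have : Pj \ I ⊆ Finset.univ \ I := Finset.sdiff_subset_sdiff (Finset.subset_univ _) (le_refl _)
        have h2 := Finset.card_le_card this
        have h3 : Pj.card ≤ (Pj \ I).card + Ij.card := by
          have := Finset.card_sdiff_add_card_inter Pj I
          rw [Finset.inter_comm, ← hIj] at this
          omega
        have h4 : (Finset.univ \ I).card = Finset.univ.card - I.card :=
          Finset.card_sdiff_of_subset (Finset.subset_univ _)
        omega
      have h5 : I.card ≤ Finset.univ.card := Finset.card_le_card (Finset.subset_univ _)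
      have h6 : (Finset.univ : Finset (Fin p)).card = p := Finset.card_univ.trans (Fintype.card_fin p)
      omega
    have hIagree : ∀ i' ∈ Ij, φ i' j (Tx x₁ j) = φ i' j (Tx x₂ j) := by
      intro i' hi'
      have hi'I : i' ∈ I := (Finset.mem_inter.mp hi').1
      have hi'P : j ∈ N i' := by
        have := (Finset.mem_inter.mp hi').2
        simpa [hPj] using this
      have hΦ := hagree i' hi'I
      have hT : T i' (Φ i' x₁) = T i' (Φ i' x₂) := by rw [hΦ]
      rw [hdec, hdec] at hT
      exact congrFun hT ⟨j, hi'P⟩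
    have := hΨ j Ij hsub hcard x₁ x₂ hIagree i (by simpa [hPj] using hij)
    exact this
  have hT : T i (Φ i x₁) = T i (Φ i x₂) := by
    rw [hdec, hdec]
    funext j
    exact key j.1 i j.2
  exact (T i).injective hT
end

section
/- In the setting of the coordinate decomposition T_i(Φ_i(x)) = (φ_i^j(𝗑^j))_{j∈N_i} with P_j = {i : j ∈ N_i} and Ψ^j(x) = (φ_i^j(𝗑^j))_{i∈P_j}: if Φ = (Φ_1,...,Φ_p) is 2q-redundant, then each Ψ^j is 2q-redundant. -/
open scoped Classical

theorem stmt18 {X : Type*} {p l q : ℕ} {n : Fin p → ℕ} {m : Fin l → ℕ}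
    {d : Fin p → Fin l → ℕ}
    (Φ : ∀ i : Fin p, X → Fin (n i) → ℝ)
    (N : Fin p → Finset (Fin l))
    (T : ∀ i : Fin p, (Fin (n i) → ℝ) ≃ (∀ j : ↥(N i), Fin (d i j) → ℝ))
    (Tx : X → ∀ j : Fin l, Fin (m j) → ℝ) (hTx : Function.Bijective Tx)
    (φ : ∀ i : Fin p, ∀ j : Fin l, (Fin (m j) → ℝ) → Fin (d i j) → ℝ)
    (hdec : ∀ i : Fin p, ∀ x : X, T i (Φ i x) = fun j : ↥(N i) => φ i j.1 (Tx x j.1))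
    -- Φ is 2q-redundant
    (hΦ : ∀ I : Finset (Fin p), p - 2 * q ≤ I.card →
      ∀ x₁ x₂ : X, (∀ i ∈ I, Φ i x₁ = Φ i x₂) → ∀ i : Fin p, Φ i x₁ = Φ i x₂) :
    -- every Ψ^j is 2q-redundant
    ∀ j : Fin l, ∀ I : Finset (Fin p),
      I ⊆ Finset.univ.filter (fun i : Fin p => j ∈ N i) →
      (Finset.univ.filter (fun i : Fin p => j ∈ N i)).card - 2 * q ≤ I.card →
      ∀ x₁ x₂ : X, (∀ i ∈ I, φ i j (Tx x₁ j) = φ i j (Tx x₂ j)) →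
        ∀ i ∈ Finset.univ.filter (fun i : Fin p => j ∈ N i),
          φ i j (Tx x₁ j) = φ i j (Tx x₂ j) := by
  intro j I hIsub hIcard x₁ x₂ hI i hi
  set Pj := Finset.univ.filter (fun i : Fin p => j ∈ N i) with hPjdef
  obtain ⟨x₂', hx₂'⟩ := hTx.2 (Function.update (Tx x₁) j (Tx x₂ j))
  set I' := I ∪ Pjᶜ with hI'def
  have hdisj : Disjoint I Pjᶜ :=
    (disjoint_compl_right).mono_left hIsub
  have hcard : p - 2 * q ≤ I'.card := by
    have h1 : I'.card = I.card + Pjᶜ.card := Finset.card_union_of_disjoint hdisj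
    have h2 : Pjᶜ.card = p - Pj.card := by
      rw [Finset.card_compl]
      simp
    have h3 : Pj.card ≤ p := by
      have := Finset.card_le_univ Pj
      simpa using this
    omega
  have key : ∀ i' ∈ I', Φ i' x₁ = Φ i' x₂' := by
    intro i' hi'
    apply (T i').injective
    rw [hdec i' x₁, hdec i' x₂']
    funext j'
    obtain ⟨jv, hjv⟩ := j'
    simp only
    rcases Finset.mem_union.1 hi' with h | h
    · by_cases hjj : jv = j
      · subst hjj
        rw [hx₂', Function.update_self]
        exact hI i' h
      · rw [hx₂', Function.update_of_ne hjj]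
    · have hjn : j ∉ N i' := by
        simp only [Finset.mem_compl, hPjdef, Finset.mem_filter, Finset.mem_univ,
          true_and] at h
        exact h
      have hjj : jv ≠ j := fun hc => hjn (hc ▸ hjv)
      rw [hx₂', Function.update_of_ne hjj]
  have hall := hΦ I' hcard x₁ x₂' key
  have hjN : j ∈ N i := by
    simp only [hPjdef, Finset.mem_filter, Finset.mem_univ, true_and] at hi
    exact hi
  have h1 := congrArg (fun f => f (⟨j, hjN⟩ : ↥(N i))) (congrArg (T i) (hall i))
  simp only [hdec i x₁, hdec i x₂'] at h1
  rw [h1, hx₂', Function.update_self]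
end
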